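/- arXiv:1203.6150 — 5 statements merged into one kernel-verified Lean document; each statement's English description precedes it below -/
import Mathlib

section
/- Let φ be a branching mechanism with linear coefficient b. Suppose v : [0,∞) × [0,∞) → [0,∞), written (t,λ) ↦ v_t(λ), is such that for every λ ≥ 0 the function t ↦ v_t(λ) is differentiable with (d/dt) v_t(λ) = −φ(v_t(λ)) for all t ≥ 0 and v_0(λ) = λ. Then for every t ≥ 0, the right derivative of λ ↦ v_t(λ) at λ = 0 exists and equals e^{−bt}; that is, lim_{λ↓0} v_t(λ)/λ = e^{−bt}. -/
open MeasureTheory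

/-- A branching mechanism `φ(λ) = bλ + σ²λ²/2 + ∫₀^∞ (e^{-zλ} - 1 + zλ) m(dz)`. -/
noncomputable def phiBM (b σ : ℝ) (m : Measure ℝ) (lam : ℝ) : ℝ :=
  b * lam + σ ^ 2 * lam ^ 2 / 2 + ∫ z, (Real.exp (-(z * lam)) - 1 + z * lam) ∂m

namespace BMaux

noncomputable def g (x : ℝ) : ℝ := Real.exp (-x) - 1 + x

lemma g_nonneg (x : ℝ) : 0 ≤ g x := by
  have := Real.add_one_le_exp (-x); unfold g; linarith

lemma g_le_self {x : ℝ} (hx : 0 ≤ x) : g x ≤ x := by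
  have : Real.exp (-x) ≤ 1 := Real.exp_le_one_iff.mpr (by linarith)
  unfold g; linarith

lemma g_le_sq {x : ℝ} (hx : 0 ≤ x) : g x ≤ x ^ 2 / 2 := by
  have hmono : MonotoneOn (fun y : ℝ => y ^ 2 / 2 - g y) (Set.Ici 0) := by
    have hd : ∀ y : ℝ, HasDerivAt (fun y : ℝ => y ^ 2 / 2 - g y) (y - (-Real.exp (-y) + 1)) y := by
      intro y
      have h1 : HasDerivAt (fun y : ℝ => y ^ 2 / 2) y y := by
        simpa using ((hasDerivAt_pow 2 y).div_const 2)
      have h2 : HasDerivAt g (-Real.exp (-y) + 1) y := by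
        have he : HasDerivAt (fun y : ℝ => Real.exp (-y)) (Real.exp (-y) * (-1)) y :=
          (hasDerivAt_neg y).exp
        unfold g
        exact ((he.sub_const 1).add (hasDerivAt_id' y)).congr_deriv (by ring)
      exact h1.sub h2
    apply monotoneOn_of_deriv_nonneg (convex_Ici 0)
    · exact fun y _ => ((hd y).continuousAt).continuousWithinAt
    · exact fun y _ => (hd y).differentiableAt.differentiableWithinAt
    · intro y hy
      rw [interior_Ici] at hy
      rw [(hd y).deriv]
      simp only [Set.mem_Ioi] at hy
      have := g_nonneg y
      unfold g at this
      linarith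
  have h0 : (fun y : ℝ => y ^ 2 / 2 - g y) 0 ≤ (fun y : ℝ => y ^ 2 / 2 - g y) x :=
    hmono (by simp) hx hx
  simp [g] at h0
  unfold g; linarith

lemma g_smul_le {c : ℝ} (hc0 : 0 ≤ c) (hc1 : c ≤ 1) (x : ℝ) : g (c * x) ≤ c * g x := by
  have hconv := convexOn_exp.2 (Set.mem_univ (-x)) (Set.mem_univ (0 : ℝ)) hc0
    (by linarith : (0:ℝ) ≤ 1 - c) (by ring)
  simp only [smul_eq_mul, mul_zero, add_zero, Real.exp_zero, mul_one] at hconv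
  have : Real.exp (-(c * x)) ≤ c * Real.exp (-x) + (1 - c) := by
    rw [show -(c * x) = c * -x by ring]; exact hconv
  unfold g; nlinarith

lemma g_le_min {x : ℝ} (M : ℝ) (hM0 : 0 ≤ M) (hM1 : M ≤ 1) (hx : 0 < x) :
    g (x * M) ≤ M * min x (x ^ 2) := by
  rcases le_total x 1 with h | h
  · have : min x (x ^ 2) = x ^ 2 := min_eq_right (by nlinarith)
    rw [this]
    have := g_le_sq (x := x * M) (by positivity)
    nlinarith
  · have : min x (x ^ 2) = x := min_eq_left (by nlinarith)
    rw [this]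
    have := g_le_self (x := x * M) (by positivity)
    nlinarith


noncomputable def psi (σ : ℝ) (m : Measure ℝ) (x : ℝ) : ℝ :=
  σ ^ 2 * x ^ 2 / 2 + ∫ z, g (z * x) ∂m

section meas

variable {σ : ℝ} {m : Measure ℝ} (hm0 : m (Set.Iic 0) = 0)
  (hm : (∫⁻ z, ENNReal.ofReal (min z (z ^ 2)) ∂m) < ⊤)

include hm0 hm

omit hm in
lemma ae_pos : ∀ᵐ z ∂m, 0 < z := by
  rw [MeasureTheory.ae_iff]
  convert hm0 using 2
  ext z
  simp [not_lt]

lemma min_integrable : Integrable (fun z => min z (z ^ 2)) m := by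
  constructor
  · exact (continuous_id.min (continuous_pow 2)).aestronglyMeasurable
  · rw [hasFiniteIntegral_iff_ofReal]
    · exact hm
    · filter_upwards [ae_pos hm0] with z hz
      simp only [Pi.zero_apply]
      positivity

lemma g_integrable {M : ℝ} (hM : 0 ≤ M) : Integrable (fun z => g (z * M)) m := by
  apply Integrable.mono' (((min_integrable hm0 hm).const_mul (M + M ^ 2)))
  · apply Continuous.aestronglyMeasurable
    have : Continuous fun z : ℝ => z * M := continuous_id.mul continuous_const
    exact (((Real.continuous_exp.comp this.neg).sub continuous_const).add this)
  · filter_upwards [ae_pos hm0] with z hz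
    rw [Real.norm_eq_abs, abs_of_nonneg (g_nonneg _)]
    rcases le_total z 1 with h | h
    · have h1 : min z (z ^ 2) = z ^ 2 := min_eq_right (by nlinarith)
      have := g_le_sq (x := z * M) (by positivity)
      rw [h1]; nlinarith
    · have h1 : min z (z ^ 2) = z := min_eq_left (by nlinarith)
      have := g_le_self (x := z * M) (by positivity)
      rw [h1]; nlinarith

omit hm0 hm in
lemma psi_nonneg (x : ℝ) : 0 ≤ psi σ m x := by
  have h1 : 0 ≤ ∫ z, g (z * x) ∂m := integral_nonneg fun z => g_nonneg _
  have : 0 ≤ σ ^ 2 * x ^ 2 / 2 := by positivity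
  unfold psi; linarith

lemma psi_ratio {x M : ℝ} (hx : 0 ≤ x) (hxM : x ≤ M) (hM : 0 < M) :
    psi σ m x ≤ x / M * psi σ m M := by
  have hc0 : 0 ≤ x / M := by positivity
  have hc1 : x / M ≤ 1 := by rw [div_le_one hM]; exact hxM
  have hint : ∫ z, g (z * x) ∂m ≤ ∫ z, x / M * g (z * M) ∂m := by
    apply integral_mono (g_integrable hm0 hm hx)
      (((g_integrable hm0 hm hM.le)).const_mul _)
    intro z
    have := g_smul_le hc0 hc1 (z * M)
    have hzx : x / M * (z * M) = z * x := by field_simp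
    rw [hzx] at this
    exact this
  rw [MeasureTheory.integral_const_mul] at hint
  unfold psi
  have heq : x / M * (σ ^ 2 * M ^ 2 / 2) = σ ^ 2 * (x * M) / 2 := by
    field_simp
  have hsq : σ ^ 2 * x ^ 2 / 2 ≤ x / M * (σ ^ 2 * M ^ 2 / 2) := by
    rw [heq]
    nlinarith [mul_nonneg (mul_nonneg (sq_nonneg σ) hx) (sub_nonneg.2 hxM)]
  rw [mul_add]
  linarith

lemma psi_tendsto : Filter.Tendsto (fun M => psi σ m M / M)
    (nhdsWithin 0 (Set.Ioi 0)) (nhds 0) := by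
  have l := nhdsWithin (0:ℝ) (Set.Ioi 0)
  -- integral part
  have hint : Filter.Tendsto (fun M => ∫ z, g (z * M) / M ∂m)
      (nhdsWithin 0 (Set.Ioi 0)) (nhds 0) := by
    have key := MeasureTheory.tendsto_integral_filter_of_dominated_convergence
      (μ := m) (l := nhdsWithin (0:ℝ) (Set.Ioi 0)) (F := fun M z => g (z * M) / M)
      (f := fun _ => (0:ℝ)) (fun z => min z (z ^ 2)) ?_ ?_ ?_ ?_
    · simpa using key
    · filter_upwards [self_mem_nhdsWithin] with M hM
      apply Continuous.aestronglyMeasurable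
      have : Continuous fun z : ℝ => z * M := continuous_id.mul continuous_const
      exact ((((Real.continuous_exp.comp this.neg).sub continuous_const).add this)).div_const M
    · filter_upwards [Ioc_mem_nhdsGT_of_mem (by constructor <;> norm_num : (0:ℝ) ∈ Set.Ico 0 1)]
        with M hM
      filter_upwards [ae_pos hm0] with z hz
      rw [Real.norm_eq_abs, abs_of_nonneg (div_nonneg (g_nonneg _) hM.1.le)]
      rw [div_le_iff₀ hM.1]
      calc g (z * M) ≤ M * min z (z ^ 2) := g_le_min M hM.1.le hM.2 hz
        _ = min z (z ^ 2) * M := by ring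
    · exact min_integrable hm0 hm
    · filter_upwards [ae_pos hm0] with z hz
      apply squeeze_zero' (f := fun M => g (z * M) / M) (g := fun M => z ^ 2 * M / 2)
      · filter_upwards [self_mem_nhdsWithin] with M hM
        have hM : (0:ℝ) < M := hM
        exact div_nonneg (g_nonneg _) hM.le
      · filter_upwards [self_mem_nhdsWithin] with M hM
        have hM : (0:ℝ) < M := hM
        rw [div_le_iff₀ hM]
        have := g_le_sq (x := z * M) (by positivity)
        nlinarith
      · have h : Filter.Tendsto (fun M : ℝ => z ^ 2 * M / 2) (nhds 0) (nhds 0) := by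
          have h2 : Continuous (fun M : ℝ => z ^ 2 * M / 2) := by continuity
          simpa using h2.tendsto (0:ℝ)
        exact h.mono_left nhdsWithin_le_nhds
  have hsq : Filter.Tendsto (fun M : ℝ => σ ^ 2 * M / 2) (nhdsWithin 0 (Set.Ioi 0)) (nhds 0) := by
    have h : Filter.Tendsto (fun M : ℝ => σ ^ 2 * M / 2) (nhds 0) (nhds 0) := by
      have h2 : Continuous (fun M : ℝ => σ ^ 2 * M / 2) := by continuity
      simpa using h2.tendsto (0:ℝ)
    exact h.mono_left nhdsWithin_le_nhds
  have := hsq.add hint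
  rw [add_zero] at this
  apply this.congr'
  filter_upwards [self_mem_nhdsWithin] with M hM
  have hM : (0:ℝ) < M := hM
  unfold psi
  rw [MeasureTheory.integral_div, add_div]
  congr 1
  field_simp

end meas


section gronwall

variable {f d : ℝ → ℝ}
  (hf : ∀ s : ℝ, 0 ≤ s → HasDerivWithinAt f (d s) (Set.Ici 0) s)

include hf

lemma expMul_hasDerivAt {c s : ℝ} (hs : 0 < s) :
    HasDerivAt (fun s => f s * Real.exp (c * s))
      ((d s + c * f s) * Real.exp (c * s)) s := by
  have h1 : HasDerivAt f (d s) s :=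
    (hf s hs.le).hasDerivAt (Ici_mem_nhds hs)
  have h2 : HasDerivAt (fun s : ℝ => Real.exp (c * s)) (Real.exp (c * s) * c) s :=
by simpa using ((hasDerivAt_id s).const_mul c).exp
  have := h1.mul h2
  refine this.congr_deriv ?_
  ring

lemma expMul_cont {c : ℝ} :
    ContinuousOn (fun s => f s * Real.exp (c * s)) (Set.Ici 0) := by
  apply ContinuousOn.mul
  · exact fun s hs => (hf s hs).continuousWithinAt
  · exact (Real.continuous_exp.comp (continuous_const.mul continuous_id)).continuousOn

lemma expMul_anti {c t : ℝ} (ht : 0 ≤ t)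
    (h : ∀ s, s ∈ Set.Ioo 0 t → d s + c * f s ≤ 0) :
    f t * Real.exp (c * t) ≤ f 0 := by
  have hanti : AntitoneOn (fun s => f s * Real.exp (c * s)) (Set.Icc 0 t) := by
    apply antitoneOn_of_deriv_nonpos (convex_Icc 0 t)
    · exact (expMul_cont hf).mono (Set.Icc_subset_Ici_self)
    · rw [interior_Icc]
      exact fun s hs => (expMul_hasDerivAt hf hs.1).differentiableAt.differentiableWithinAt
    · rw [interior_Icc]
      intro s hs
      rw [(expMul_hasDerivAt hf hs.1).deriv]
      have := h s hs
      have he := Real.exp_pos (c * s)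
      nlinarith
  have := hanti (Set.left_mem_Icc.mpr ht) (Set.right_mem_Icc.mpr ht) ht
  simpa using this

lemma expMul_mono {c t : ℝ} (ht : 0 ≤ t)
    (h : ∀ s, s ∈ Set.Ioo 0 t → 0 ≤ d s + c * f s) :
    f 0 ≤ f t * Real.exp (c * t) := by
  have hmono : MonotoneOn (fun s => f s * Real.exp (c * s)) (Set.Icc 0 t) := by
    apply monotoneOn_of_deriv_nonneg (convex_Icc 0 t)
    · exact (expMul_cont hf).mono (Set.Icc_subset_Ici_self)
    · rw [interior_Icc]
      exact fun s hs => (expMul_hasDerivAt hf hs.1).differentiableAt.differentiableWithinAt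
    · rw [interior_Icc]
      intro s hs
      rw [(expMul_hasDerivAt hf hs.1).deriv]
      have := h s hs
      have he := Real.exp_pos (c * s)
      nlinarith
  have := hmono (Set.left_mem_Icc.mpr ht) (Set.right_mem_Icc.mpr ht) ht
  simpa using this

end gronwall

end BMaux

theorem stmt4 (b σ : ℝ) (hσ : 0 ≤ σ) (m : Measure ℝ)
    (hm0 : m (Set.Iic 0) = 0)
    (hm : (∫⁻ z, ENNReal.ofReal (min z (z ^ 2)) ∂m) < ⊤)
    (v : ℝ → ℝ → ℝ)
    -- `v` takes values in `[0,∞)` on `[0,∞) × [0,∞)`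
    (hvnonneg : ∀ t lam : ℝ, 0 ≤ t → 0 ≤ lam → 0 ≤ v t lam)
    -- `v_0(λ) = λ`
    (hv0 : ∀ lam : ℝ, 0 ≤ lam → v 0 lam = lam)
    -- `(d/dt) v_t(λ) = -φ(v_t(λ))` for all `t ≥ 0`
    (hode : ∀ lam : ℝ, 0 ≤ lam → ∀ t : ℝ, 0 ≤ t →
      HasDerivWithinAt (fun s => v s lam) (-phiBM b σ m (v t lam)) (Set.Ici 0) t) :
    ∀ t : ℝ, 0 ≤ t →
      Filter.Tendsto (fun lam => v t lam / lam) (nhdsWithin 0 (Set.Ioi 0))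
        (nhds (Real.exp (-(b * t)))) := by
  intro t ht
  have hphi : ∀ x : ℝ, phiBM b σ m x = b * x + BMaux.psi σ m x := by
    intro x
    simp only [phiBM, BMaux.psi, BMaux.g]
    ring
  set E := Real.exp (|b| * t) with hE
  have hEpos : 0 < E := Real.exp_pos _
  -- upper bound
  have hupper : ∀ lam : ℝ, 0 ≤ lam → ∀ s, s ∈ Set.Icc 0 t →
      v s lam ≤ lam * Real.exp (-(b * s)) := by
    intro lam hlam s hs
    have key := BMaux.expMul_anti (f := fun r => v r lam)
      (d := fun r => -phiBM b σ m (v r lam))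
      (fun r hr => hode lam hlam r hr) (c := b) hs.1
      (fun r hr => by
        show -phiBM b σ m (v r lam) + b * v r lam ≤ 0
        rw [hphi]
        have := BMaux.psi_nonneg (σ := σ) (m := m) (v r lam)
        linarith)
    have key : v s lam * Real.exp (b * s) ≤ v 0 lam := key
    rw [hv0 lam hlam] at key
    calc v s lam = v s lam * Real.exp (b * s) * Real.exp (-(b * s)) := by
          rw [mul_assoc, ← Real.exp_add]; simp
      _ ≤ lam * Real.exp (-(b * s)) :=
          mul_le_mul_of_nonneg_right key (Real.exp_pos _).le
  have hbound : ∀ lam : ℝ, 0 ≤ lam → ∀ s, s ∈ Set.Icc 0 t → v s lam ≤ lam * E := by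
    intro lam hlam s hs
    refine (hupper lam hlam s hs).trans ?_
    apply mul_le_mul_of_nonneg_left ?_ hlam
    apply Real.exp_le_exp.mpr
    calc -(b * s) = -b * s := by ring
      _ ≤ |b| * s := mul_le_mul_of_nonneg_right (neg_le_abs b) hs.1
      _ ≤ |b| * t := mul_le_mul_of_nonneg_left hs.2 (abs_nonneg b)
  -- epsilon
  set eps : ℝ → ℝ := fun lam => BMaux.psi σ m (lam * E) / (lam * E) with heps_def
  -- lower bound
  have hlower : ∀ lam : ℝ, 0 < lam →
      lam * Real.exp (-((b + eps lam) * t)) ≤ v t lam := by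
    intro lam hlam
    have hME : 0 < lam * E := by positivity
    have key := BMaux.expMul_mono (f := fun r => v r lam)
      (d := fun r => -phiBM b σ m (v r lam))
      (fun r hr => hode lam hlam.le r hr) (c := b + eps lam) ht
      (fun r hr => by
        have h0 : 0 ≤ v r lam := hvnonneg r lam hr.1.le hlam.le
        have h1 : v r lam ≤ lam * E :=
          hbound lam hlam.le r ⟨hr.1.le, hr.2.le⟩
        have h2 := BMaux.psi_ratio (σ := σ) hm0 hm h0 h1 hME
        rw [div_mul_eq_mul_div, mul_div_assoc] at h2
        show 0 ≤ -phiBM b σ m (v r lam) + (b + eps lam) * v r lam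
        rw [hphi]
        simp only [heps_def]
        nlinarith)
    have key : v 0 lam ≤ v t lam * Real.exp ((b + eps lam) * t) := key
    rw [hv0 lam hlam.le] at key
    calc lam * Real.exp (-((b + eps lam) * t))
        ≤ v t lam * Real.exp ((b + eps lam) * t) * Real.exp (-((b + eps lam) * t)) :=
          mul_le_mul_of_nonneg_right key (Real.exp_pos _).le
      _ = v t lam := by rw [mul_assoc, ← Real.exp_add]; simp
  -- eps tends to 0
  have hmul : Filter.Tendsto (fun lam : ℝ => lam * E)
      (nhdsWithin 0 (Set.Ioi 0)) (nhdsWithin 0 (Set.Ioi 0)) := by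
    apply tendsto_nhdsWithin_of_tendsto_nhds_of_eventually_within
    · have h1 : Filter.Tendsto (fun lam : ℝ => lam * E) (nhds 0) (nhds 0) := by
        have h2 : Continuous (fun lam : ℝ => lam * E) := by continuity
        simpa using h2.tendsto (0:ℝ)
      exact h1.mono_left nhdsWithin_le_nhds
    · filter_upwards [self_mem_nhdsWithin] with lam hlam
      exact mul_pos hlam hEpos
  have heps : Filter.Tendsto eps (nhdsWithin 0 (Set.Ioi 0)) (nhds 0) :=
    (BMaux.psi_tendsto hm0 hm).comp hmul
  -- squeeze
  have hlowT : Filter.Tendsto (fun lam => Real.exp (-((b + eps lam) * t)))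
      (nhdsWithin 0 (Set.Ioi 0)) (nhds (Real.exp (-(b * t)))) := by
    have h1 : Filter.Tendsto (fun lam => -((b + eps lam) * t))
        (nhdsWithin 0 (Set.Ioi 0)) (nhds (-(b * t))) := by
      have hb : Filter.Tendsto (fun _ : ℝ => b) (nhdsWithin 0 (Set.Ioi 0)) (nhds b) :=
        tendsto_const_nhds
      have h2 := (hb.add heps).mul_const t
      simpa using h2.neg
    exact (Real.continuous_exp.tendsto _).comp h1
  apply tendsto_of_tendsto_of_tendsto_of_le_of_le' hlowT tendsto_const_nhds
  · filter_upwards [self_mem_nhdsWithin] with lam hlam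
    have hlam : (0:ℝ) < lam := hlam
    rw [le_div_iff₀ hlam]
    calc Real.exp (-((b + eps lam) * t)) * lam
        = lam * Real.exp (-((b + eps lam) * t)) := by ring
      _ ≤ v t lam := hlower lam hlam
  · filter_upwards [self_mem_nhdsWithin] with lam hlam
    have hlam : (0:ℝ) < lam := hlam
    rw [div_le_iff₀ hlam]
    calc v t lam ≤ lam * Real.exp (-(b * t)) :=
          hupper lam hlam.le t ⟨ht, le_refl t⟩
      _ = Real.exp (-(b * t)) * lam := by ring
end

section
/- Let p < q be reals, σ ≥ 0, b_p, b_q ∈ ℝ, and let m_p, m_q be Borel measures on (0,∞) with ∫₀^∞ (z ∧ z²) m_p(dz) < ∞ and ∫₀^∞ (z ∧ z²) m_q(dz) < ∞. Define φ_r(λ) = b_r λ + (1/2)σ²λ² + ∫₀^∞ (e^{−zλ} − 1 + zλ) m_r(dz) for r ∈ {p,q}. Let θ ↦ β_θ be a nonnegative Borel function on [p,q] and θ ↦ n_θ(dz) a Borel kernel from [p,q] to (0,∞) with sup_{p ≤ θ ≤ q} [β_θ + ∫₀^∞ z n_θ(dz)] < ∞, and set ζ_θ(λ) = β_θ λ +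 ∫₀^∞ (1 − e^{−zλ}) n_θ(dz). If φ_p(λ) − φ_q(λ) = ∫_p^q ζ_θ(λ) dθ for every λ ≥ 0, then b_q = b_p − ∫_p^q β_θ dθ − ∫_p^q (∫₀^∞ z n_θ(dz)) dθ, and m_q(B) = m_p(B) + ∫_p^q n_θ(B) dθ for every Borel set B ⊂ (0,∞). -/
open MeasureTheory Real


lemma exp_est1 {u : ℝ} : 0 ≤ Real.exp (-u) - 1 + u := by
  have := Real.add_one_le_exp (-u); linarith

lemma exp_est2 {u : ℝ} (hu : 0 ≤ u) : Real.exp (-u) - 1 + u ≤ u := by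
  have : Real.exp (-u) ≤ 1 := Real.exp_le_one_iff.2 (by linarith)
  linarith

lemma exp_est3 {u : ℝ} (hu : 0 ≤ u) : Real.exp (-u) - 1 + u ≤ u ^ 2 := by
  rcases le_total u 1 with h | h
  · have h1 : |(-u)| ≤ 1 := by rw [abs_neg, abs_of_nonneg hu]; exact h
    have h2 := (abs_le.mp (Real.abs_exp_sub_one_sub_id_le h1)).2
    nlinarith
  · have h1 := exp_est2 hu
    nlinarith

lemma exp_est4 {u : ℝ} (hu : 0 ≤ u) : 0 ≤ 1 - Real.exp (-u) ∧ 1 - Real.exp (-u) ≤ u := by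
  constructor
  · have : Real.exp (-u) ≤ 1 := Real.exp_le_one_iff.2 (by linarith)
    linarith
  · have := Real.add_one_le_exp (-u); linarith

lemma ae_pos_of_Iic {μ : Measure ℝ} (h : μ (Set.Iic 0) = 0) : ∀ᵐ z ∂μ, 0 < z := by
  have : Set.Ioi (0:ℝ) ∈ ae μ := mem_ae_iff.2 (by rw [Set.compl_Ioi]; exact h)
  filter_upwards [this] with z hz using hz

lemma integrable_of_lint {μ : Measure ℝ} (hμ0 : μ (Set.Iic 0) = 0) {f : ℝ → ℝ}
    (hf : Measurable f) (h0 : ∀ z, 0 < z → 0 ≤ f z)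
    (hfin : ∫⁻ z, ENNReal.ofReal (f z) ∂μ < ⊤) : Integrable f μ := by
  refine ⟨hf.aestronglyMeasurable, ?_⟩
  rw [hasFiniteIntegral_iff_norm]
  have : ∫⁻ z, ENNReal.ofReal ‖f z‖ ∂μ = ∫⁻ z, ENNReal.ofReal (f z) ∂μ := by
    refine lintegral_congr_ae ?_
    filter_upwards [ae_pos_of_Iic hμ0] with z hz
    rw [Real.norm_eq_abs, abs_of_nonneg (h0 z hz)]
  rwa [this]

lemma integral_nonneg_toReal {μ : Measure ℝ} (hμ0 : μ (Set.Iic 0) = 0) {f : ℝ → ℝ}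
    (hf : Measurable f) (h0 : ∀ z, 0 < z → 0 ≤ f z) :
    ∫ z, f z ∂μ = (∫⁻ z, ENNReal.ofReal (f z) ∂μ).toReal :=
  integral_eq_lintegral_of_nonneg_ae ((ae_pos_of_Iic hμ0).mono fun z hz => h0 z hz)
    hf.aestronglyMeasurable

lemma lint_mono_pos {μ : Measure ℝ} (hμ0 : μ (Set.Iic 0) = 0) {f g : ℝ → ℝ}
    (hle : ∀ z, 0 < z → f z ≤ g z) :
    ∫⁻ z, ENNReal.ofReal (f z) ∂μ ≤ ∫⁻ z, ENNReal.ofReal (g z) ∂μ := by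
  refine lintegral_mono_ae ?_
  filter_upwards [ae_pos_of_Iic hμ0] with z hz using ENNReal.ofReal_le_ofReal (hle z hz)

lemma kernel_fubini (p q : ℝ) (n : ProbabilityTheory.Kernel ℝ ℝ) (C : ENNReal) (hCfin : C < ⊤)
    (hn0 : ∀ θ ∈ Set.Icc p q, (n θ) (Set.Iic 0) = 0)
    (hC : ∀ θ ∈ Set.Icc p q, (∫⁻ z, ENNReal.ofReal z ∂(n θ)) ≤ C)
    (hν0 : ((volume.restrict (Set.Ioc p q)).bind (fun θ => n θ)) (Set.Iic 0) = 0)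
    (g : ℝ → ℝ) (hg : Measurable g) (K : ℝ) (hK : 0 ≤ K)
    (hgpos : ∀ z, 0 < z → 0 ≤ g z) (hgle : ∀ z, 0 < z → g z ≤ K * z) :
    (∫ θ in Set.Ioc p q, ∫ z, g z ∂(n θ))
      = ∫ z, g z ∂((volume.restrict (Set.Ioc p q)).bind (fun θ => n θ))
    ∧ Integrable (fun θ => ∫ z, g z ∂(n θ)) (volume.restrict (Set.Ioc p q)) := by
  set μθ := volume.restrict (Set.Ioc p q) with hμθ
  haveI : IsFiniteMeasure μθ := by
    constructor
    rw [hμθ, Measure.restrict_apply_univ, Real.volume_Ioc]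
    exact ENNReal.ofReal_lt_top
  set ν := μθ.bind (fun θ => n θ) with hνdef
  have hgE : Measurable fun z => ENNReal.ofReal (g z) := hg.ennreal_ofReal
  set Lg : ℝ → ENNReal := fun θ => ∫⁻ z, ENNReal.ofReal (g z) ∂(n θ) with hLg
  have hLgmeas : Measurable Lg := (Measure.measurable_lintegral hgE).comp n.measurable
  have haeθ : ∀ᵐ θ ∂μθ, θ ∈ Set.Icc p q := by
    rw [hμθ]
    filter_upwards [ae_restrict_mem measurableSet_Ioc] with θ hθ
    exact Set.Ioc_subset_Icc_self hθ
  -- bound on Lg on Icc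
  have hLgC : ∀ θ ∈ Set.Icc p q, Lg θ ≤ ENNReal.ofReal K * C := by
    intro θ hθ
    calc Lg θ ≤ ∫⁻ z, ENNReal.ofReal (K * z) ∂(n θ) := lint_mono_pos (hn0 θ hθ) hgle
      _ = ENNReal.ofReal K * ∫⁻ z, ENNReal.ofReal z ∂(n θ) := by
          simp_rw [ENNReal.ofReal_mul hK]
          exact lintegral_const_mul'' _ (measurable_id.ennreal_ofReal).aemeasurable
      _ ≤ ENNReal.ofReal K * C := mul_le_mul_right (hC θ hθ) _
  have hKCfin : ENNReal.ofReal K * C < ⊤ := ENNReal.mul_lt_top ENNReal.ofReal_lt_top hCfin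
  -- pointwise identification on Icc
  have heq : ∀ θ ∈ Set.Icc p q, ∫ z, g z ∂(n θ) = (Lg θ).toReal := by
    intro θ hθ
    exact integral_nonneg_toReal (hn0 θ hθ) hg hgpos
  have hbind : ∀ {f : ℝ → ENNReal}, Measurable f →
      ∫⁻ z, f z ∂ν = ∫⁻ θ, (∫⁻ z, f z ∂(n θ)) ∂μθ := by
    intro f hf
    rw [hνdef]
    exact Measure.lintegral_bind n.measurable.aemeasurable hf.aemeasurable
  have step1 : ∫ θ in Set.Ioc p q, ∫ z, g z ∂(n θ) = ∫ θ, (Lg θ).toReal ∂μθ := by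
    rw [hμθ]
    refine integral_congr_ae ?_
    filter_upwards [haeθ] with θ hθ using heq θ hθ
  have step2 : ∫ θ, (Lg θ).toReal ∂μθ = (∫⁻ θ, Lg θ ∂μθ).toReal := by
    refine integral_toReal hLgmeas.aemeasurable ?_
    filter_upwards [haeθ] with θ hθ using lt_of_le_of_lt (hLgC θ hθ) hKCfin
  have step3 : (∫⁻ θ, Lg θ ∂μθ).toReal = (∫⁻ z, ENNReal.ofReal (g z) ∂ν).toReal := by
    rw [hbind hgE]
  have step4 : ∫ z, g z ∂ν = (∫⁻ z, ENNReal.ofReal (g z) ∂ν).toReal :=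
    integral_nonneg_toReal hν0 hg hgpos
  constructor
  · rw [step1, step2, step3, ← step4]
  · have : Integrable (fun θ => (Lg θ).toReal) μθ := by
      refine Integrable.mono' (integrable_const ((ENNReal.ofReal K * C).toReal))
        hLgmeas.ennreal_toReal.aestronglyMeasurable ?_
      filter_upwards [haeθ] with θ hθ
      rw [Real.norm_eq_abs, abs_of_nonneg ENNReal.toReal_nonneg]
      exact ENNReal.toReal_mono hKCfin.ne (hLgC θ hθ)
    refine this.congr ?_
    filter_upwards [haeθ] with θ hθ using (heq θ hθ).symm

lemma momentDet (ρ1 ρ2 : Measure ℝ) [IsFiniteMeasure ρ1] [IsFiniteMeasure ρ2]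
    (h1 : ρ1 (Set.Icc (0:ℝ) 1)ᶜ = 0) (h2 : ρ2 (Set.Icc (0:ℝ) 1)ᶜ = 0)
    (h : ∀ k : ℕ, ∫⁻ x, ENNReal.ofReal (x ^ k) ∂ρ1 = ∫⁻ x, ENNReal.ofReal (x ^ k) ∂ρ2) :
    ρ1 = ρ2 := by
  have hae1 : ∀ᵐ x ∂ρ1, x ∈ Set.Icc (0:ℝ) 1 := mem_ae_iff.2 h1
  have hae2 : ∀ᵐ x ∂ρ2, x ∈ Set.Icc (0:ℝ) 1 := mem_ae_iff.2 h2
  -- integrability of powers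
  have hip : ∀ (ρ : Measure ℝ) [IsFiniteMeasure ρ], (∀ᵐ x ∂ρ, x ∈ Set.Icc (0:ℝ) 1) →
      ∀ k : ℕ, Integrable (fun x : ℝ => x ^ k) ρ := by
    intro ρ _ hae k
    refine Integrable.mono' (integrable_const (1:ℝ)) (measurable_id.pow_const k).aestronglyMeasurable ?_
    filter_upwards [hae] with x hx
    rw [Real.norm_eq_abs, abs_of_nonneg (pow_nonneg hx.1 k)]
    exact pow_le_one₀ hx.1 hx.2
  -- Bochner moments agree
  have hmom : ∀ k : ℕ, ∫ x, x ^ k ∂ρ1 = ∫ x, x ^ k ∂ρ2 := by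
    intro k
    have e1 : ∫ x, x ^ k ∂ρ1 = (∫⁻ x, ENNReal.ofReal (x ^ k) ∂ρ1).toReal :=
      integral_eq_lintegral_of_nonneg_ae (hae1.mono fun x hx => pow_nonneg hx.1 k)
        (measurable_id.pow_const k).aestronglyMeasurable
    have e2 : ∫ x, x ^ k ∂ρ2 = (∫⁻ x, ENNReal.ofReal (x ^ k) ∂ρ2).toReal :=
      integral_eq_lintegral_of_nonneg_ae (hae2.mono fun x hx => pow_nonneg hx.1 k)
        (measurable_id.pow_const k).aestronglyMeasurable
    rw [e1, e2, h k]
  -- polynomials agree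
  have hpolyint : ∀ (ρ : Measure ℝ) [IsFiniteMeasure ρ], (∀ᵐ x ∂ρ, x ∈ Set.Icc (0:ℝ) 1) →
      ∀ P : Polynomial ℝ, Integrable (fun x : ℝ => P.eval x) ρ := by
    intro ρ _ hae P
    have : (fun x : ℝ => P.eval x)
        = fun x => ∑ i ∈ Finset.range (P.natDegree + 1), P.coeff i * x ^ i := by
      funext x; rw [Polynomial.eval_eq_sum_range]
    rw [this]
    exact integrable_finset_sum _ fun i _ => (hip ρ hae i).const_mul _
  have hpoly : ∀ P : Polynomial ℝ, ∫ x, P.eval x ∂ρ1 = ∫ x, P.eval x ∂ρ2 := by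
    intro P
    have e : ∀ (ρ : Measure ℝ) [IsFiniteMeasure ρ], (∀ᵐ x ∂ρ, x ∈ Set.Icc (0:ℝ) 1) →
        ∫ x, P.eval x ∂ρ = ∑ i ∈ Finset.range (P.natDegree + 1), P.coeff i * ∫ x, x ^ i ∂ρ := by
      intro ρ _ hae
      have : ∫ x, P.eval x ∂ρ
          = ∫ x, ∑ i ∈ Finset.range (P.natDegree + 1), P.coeff i * x ^ i ∂ρ := by
        congr 1; funext x; rw [Polynomial.eval_eq_sum_range]
      rw [this, integral_finset_sum _ fun i _ => (hip ρ hae i).const_mul _]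
      simp_rw [integral_const_mul]
    rw [e ρ1 hae1, e ρ2 hae2]
    exact Finset.sum_congr rfl fun i _ => by rw [hmom i]
  -- continuous integrable functions agree
  have hcont : ∀ f : ℝ → ℝ, Continuous f → Integrable f ρ1 → Integrable f ρ2 →
      ∫ x, f x ∂ρ1 = ∫ x, f x ∂ρ2 := by
    intro f hfc hfi1 hfi2
    set M : ℝ := (ρ1 Set.univ).toReal + (ρ2 Set.univ).toReal with hM
    have hM0 : 0 ≤ M := add_nonneg ENNReal.toReal_nonneg ENNReal.toReal_nonneg
    have key : ∀ ε > (0:ℝ), |∫ x, f x ∂ρ1 - ∫ x, f x ∂ρ2| ≤ ε := by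
      intro ε hε
      set δ : ℝ := ε / (M + 1) with hδdef
      have hδ : 0 < δ := div_pos hε (by linarith)
      obtain ⟨P, hP⟩ := exists_polynomial_near_of_continuousOn 0 1 f hfc.continuousOn δ hδ
      have hbound : ∀ (ρ : Measure ℝ) [IsFiniteMeasure ρ], (∀ᵐ x ∂ρ, x ∈ Set.Icc (0:ℝ) 1) →
          Integrable f ρ →
          |∫ x, f x ∂ρ - ∫ x, P.eval x ∂ρ| ≤ δ * (ρ Set.univ).toReal := by
        intro ρ _ hae hfi
        rw [← integral_sub hfi (hpolyint ρ hae P)]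
        refine norm_integral_le_of_norm_le_const (f := fun x => f x - P.eval x) (μ := ρ) (C := δ) ?_
        filter_upwards [hae] with x hx
        rw [Real.norm_eq_abs, abs_sub_comm]
        exact (hP x hx).le
      have b1 := hbound ρ1 hae1 hfi1
      have b2 := hbound ρ2 hae2 hfi2
      have hδM : δ * (ρ1 Set.univ).toReal + δ * (ρ2 Set.univ).toReal ≤ ε := by
        have : δ * (ρ1 Set.univ).toReal + δ * (ρ2 Set.univ).toReal = δ * M := by rw [hM]; ring
        rw [this, hδdef, div_mul_eq_mul_div, div_le_iff₀ (by linarith : (0:ℝ) < M + 1)]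
        nlinarith
      calc |∫ x, f x ∂ρ1 - ∫ x, f x ∂ρ2|
          = |(∫ x, f x ∂ρ1 - ∫ x, P.eval x ∂ρ1) - (∫ x, f x ∂ρ2 - ∫ x, P.eval x ∂ρ2)| := by
            rw [hpoly P]; ring_nf
        _ ≤ |∫ x, f x ∂ρ1 - ∫ x, P.eval x ∂ρ1| + |∫ x, f x ∂ρ2 - ∫ x, P.eval x ∂ρ2| :=
            abs_sub _ _
        _ ≤ δ * (ρ1 Set.univ).toReal + δ * (ρ2 Set.univ).toReal := add_le_add b1 b2
        _ ≤ ε := hδM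
    have : |∫ x, f x ∂ρ1 - ∫ x, f x ∂ρ2| ≤ 0 :=
      le_of_forall_pos_le_add (by intro ε hε; simpa using key ε hε)
    have := abs_nonpos_iff.mp this
    linarith [this]
  -- conclude via bounded continuous ℝ≥0 functions
  refine ext_of_forall_lintegral_eq_of_IsFiniteMeasure ?_
  intro f
  have hint1 : Integrable (((↑) : NNReal → ℝ) ∘ ⇑f) ρ1 := f.integrable_of_nnreal ρ1
  have hint2 : Integrable (((↑) : NNReal → ℝ) ∘ ⇑f) ρ2 := f.integrable_of_nnreal ρ2
  have hceq := hcont (((↑) : NNReal → ℝ) ∘ ⇑f) (NNReal.continuous_coe.comp f.continuous) hint1 hint2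
  have t1 := BoundedContinuousFunction.toReal_lintegral_coe_eq_integral f ρ1
  have t2 := BoundedContinuousFunction.toReal_lintegral_coe_eq_integral f ρ2
  have fin1 : ∫⁻ x, (f x : ENNReal) ∂ρ1 ≠ ⊤ :=
    (BoundedContinuousFunction.lintegral_lt_top_of_nnreal ρ1 f).ne
  have fin2 : ∫⁻ x, (f x : ENNReal) ∂ρ2 ≠ ⊤ :=
    (BoundedContinuousFunction.lintegral_lt_top_of_nnreal ρ2 f).ne
  have : (∫⁻ x, (f x : ENNReal) ∂ρ1).toReal = (∫⁻ x, (f x : ENNReal) ∂ρ2).toReal := by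
    rw [t1, t2]; exact hceq
  exact (ENNReal.toReal_eq_toReal_iff' fin1 fin2).mp this

lemma laplaceDet (μ ν : Measure ℝ) [IsFiniteMeasure μ] [IsFiniteMeasure ν]
    (hμ0 : μ (Set.Iic 0) = 0) (hν0 : ν (Set.Iic 0) = 0)
    (h : ∀ k : ℕ, ∫⁻ z, ENNReal.ofReal (Real.exp (-(z * k))) ∂μ
        = ∫⁻ z, ENNReal.ofReal (Real.exp (-(z * k))) ∂ν) : μ = ν := by
  set T : ℝ → ℝ := fun z => Real.exp (-z) with hT
  have hTc : Continuous T := Real.continuous_exp.comp continuous_neg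
  have hTinj : Function.Injective T := fun a b hab => by
    have : -a = -b := Real.exp_injective hab
    linarith
  have hTme : MeasurableEmbedding T := hTc.measurableEmbedding hTinj
  have hconc : ∀ (ρ : Measure ℝ), ρ (Set.Iic 0) = 0 →
      (ρ.map T) (Set.Icc (0:ℝ) 1)ᶜ = 0 := by
    intro ρ hρ
    rw [Measure.map_apply hTc.measurable measurableSet_Icc.compl]
    refine measure_mono_null ?_ hρ
    intro z hz
    simp only [Set.mem_preimage, Set.mem_compl_iff, Set.mem_Icc, not_and_or, not_le] at hz
    rcases hz with hz | hz
    · exact absurd (Real.exp_pos (-z)).le (not_le.2 hz)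
    · have h2 : Real.exp 0 < Real.exp (-z) := by simpa [hT] using hz
      have := Real.exp_lt_exp.mp h2
      exact Set.mem_Iic.2 (by linarith)
  have hmomeq : ∀ (ρ : Measure ℝ) (k : ℕ), ∫⁻ x, ENNReal.ofReal (x ^ k) ∂(ρ.map T)
      = ∫⁻ z, ENNReal.ofReal (Real.exp (-(z * k))) ∂ρ := by
    intro ρ k
    rw [lintegral_map (by fun_prop : Measurable fun x : ℝ => ENNReal.ofReal (x ^ k)) hTc.measurable]
    congr 1; funext z
    congr 1
    rw [hT, ← Real.exp_nat_mul]
    ring_nf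
  haveI : IsFiniteMeasure (μ.map T) :=
    ⟨by rw [Measure.map_apply hTc.measurable .univ]; exact measure_lt_top μ _⟩
  haveI : IsFiniteMeasure (ν.map T) :=
    ⟨by rw [Measure.map_apply hTc.measurable .univ]; exact measure_lt_top ν _⟩
  have hρeq : μ.map T = ν.map T := by
    refine momentDet _ _ (hconc μ hμ0) (hconc ν hν0) fun k => ?_
    rw [hmomeq, hmomeq, h k]
  ext s hs
  have him : MeasurableSet (T '' s) := hTme.measurableSet_image.2 hs
  have e1 : (μ.map T) (T '' s) = μ s := by
    rw [Measure.map_apply hTc.measurable him, hTinj.preimage_image]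
  have e2 : (ν.map T) (T '' s) = ν s := by
    rw [Measure.map_apply hTc.measurable him, hTinj.preimage_image]
  rw [← e1, ← e2, hρeq]

noncomputable def Ffun (lam z : ℝ) : ℝ := Real.exp (-(z * lam)) - 1 + z * lam


lemma Ffun_meas (lam : ℝ) : Measurable (Ffun lam) := by unfold Ffun; fun_prop

lemma Ffun_nonneg (lam z : ℝ) : 0 ≤ Ffun lam z := exp_est1

lemma Ffun_le_min {lam : ℝ} (hlam : 0 ≤ lam) {z : ℝ} (hz : 0 < z) :
    Ffun lam z ≤ max lam (lam ^ 2) * min z (z ^ 2) := by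
  rcases le_total z 1 with h | h
  · have h3 := exp_est3 (mul_nonneg hz.le hlam)
    rw [min_eq_right (by nlinarith)]
    unfold Ffun
    nlinarith [mul_nonneg (sub_nonneg.2 (le_max_right lam (lam ^ 2))) (sq_nonneg z),
      sq_nonneg (z * lam)]
  · have h2 := exp_est2 (mul_nonneg hz.le hlam)
    rw [min_eq_left (by nlinarith)]
    unfold Ffun
    nlinarith [mul_nonneg (sub_nonneg.2 (le_max_left lam (lam ^ 2))) hz.le]




lemma Ffun_integrable {μ : Measure ℝ} (hμ0 : μ (Set.Iic 0) = 0)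
    (hm : (∫⁻ z, ENNReal.ofReal (min z (z ^ 2)) ∂μ) < ⊤) {lam : ℝ} (hlam : 0 ≤ lam) :
    Integrable (Ffun lam) μ := by
  refine integrable_of_lint hμ0 (Ffun_meas lam) (fun z _ => Ffun_nonneg lam z) ?_
  calc ∫⁻ z, ENNReal.ofReal (Ffun lam z) ∂μ
      ≤ ∫⁻ z, ENNReal.ofReal (max lam (lam ^ 2) * min z (z ^ 2)) ∂μ :=
        lint_mono_pos hμ0 (fun z hz => Ffun_le_min hlam hz)
    _ = ENNReal.ofReal (max lam (lam ^ 2)) * ∫⁻ z, ENNReal.ofReal (min z (z ^ 2)) ∂μ := by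
        simp_rw [ENNReal.ofReal_mul (le_trans hlam (le_max_left _ _))]
        exact lintegral_const_mul'' _ (by fun_prop)
    _ < ⊤ := ENNReal.mul_lt_top ENNReal.ofReal_lt_top hm

lemma Ffun_second_diff (lam h z : ℝ) :
    Ffun lam z - 2 * Ffun (lam + h) z + Ffun (lam + 2 * h) z
      = Real.exp (-(z * lam)) * (1 - Real.exp (-(z * h))) ^ 2 := by
  unfold Ffun
  have e1 : Real.exp (-(z * (lam + h))) = Real.exp (-(z * lam)) * Real.exp (-(z * h)) := by
    rw [← Real.exp_add]; ring_nf
  have e2 : Real.exp (-(z * (lam + 2 * h)))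
      = Real.exp (-(z * lam)) * Real.exp (-(z * h)) * Real.exp (-(z * h)) := by
    rw [← Real.exp_add, ← Real.exp_add]; ring_nf
  rw [e1, e2]; ring

lemma sq_bound {h z : ℝ} (hh : 0 < h) (hz : 0 < z) :
    (1 - Real.exp (-(z * h))) ^ 2 ≤ max 1 (h ^ 2) * min z (z ^ 2) := by
  obtain ⟨h0, h1⟩ := exp_est4 (mul_nonneg hz.le hh.le)
  rcases le_total z 1 with hc | hc
  · rw [min_eq_right (by nlinarith)]
    nlinarith [mul_nonneg (sub_nonneg.2 (le_max_right 1 (h ^ 2))) (sq_nonneg z)]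
  · rw [min_eq_left (by nlinarith)]
    have he : 0 < Real.exp (-(z * h)) := Real.exp_pos _
    nlinarith [mul_nonneg (sub_nonneg.2 (le_max_left 1 (h ^ 2))) hz.le]




theorem stmt8 (p q : ℝ) (hpq : p < q) (σ : ℝ) (hσ : 0 ≤ σ)
    (bp bq : ℝ) (mp mq : Measure ℝ)
    (hmp0 : mp (Set.Iic 0) = 0) (hmq0 : mq (Set.Iic 0) = 0)
    (hmp : (∫⁻ z, ENNReal.ofReal (min z (z ^ 2)) ∂mp) < ⊤)
    (hmq : (∫⁻ z, ENNReal.ofReal (min z (z ^ 2)) ∂mq) < ⊤)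
    -- the density `β` and the kernel `n`
    (β : ℝ → ℝ) (hβmeas : Measurable β) (hβnonneg : ∀ θ, 0 ≤ β θ)
    (n : ProbabilityTheory.Kernel ℝ ℝ)
    (hn0 : ∀ θ ∈ Set.Icc p q, (n θ) (Set.Iic 0) = 0)
    -- `sup_{p ≤ θ ≤ q} [β_θ + ∫₀^∞ z n_θ(dz)] < ∞`
    (hsup : ∃ C : ENNReal, C < ⊤ ∧ ∀ θ ∈ Set.Icc p q,
      ENNReal.ofReal (β θ) + (∫⁻ z, ENNReal.ofReal z ∂(n θ)) ≤ C)
    -- `φ_p(λ) - φ_q(λ) = ∫_p^q ζ_θ(λ) dθ` for every `λ ≥ 0`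
    (hζ : ∀ lam : ℝ, 0 ≤ lam →
      (bp * lam + σ ^ 2 * lam ^ 2 / 2 + ∫ z, (Real.exp (-(z * lam)) - 1 + z * lam) ∂mp)
        - (bq * lam + σ ^ 2 * lam ^ 2 / 2 + ∫ z, (Real.exp (-(z * lam)) - 1 + z * lam) ∂mq)
      = ∫ θ in Set.Ioc p q, (β θ * lam + ∫ z, (1 - Real.exp (-(z * lam))) ∂(n θ))) :
    -- conclusion: identification of the parameters
    bq = bp - (∫ θ in Set.Ioc p q, β θ)
          - (∫ θ in Set.Ioc p q, ∫ z, z ∂(n θ)) ∧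
    ∀ B : Set ℝ, MeasurableSet B → B ⊆ Set.Ioi 0 →
      mq B = mp B + ∫⁻ θ in Set.Ioc p q, (n θ) B := by
  classical
  obtain ⟨C, hCfin, hC⟩ := hsup
  have hCβ : ∀ θ ∈ Set.Icc p q, ENNReal.ofReal (β θ) ≤ C :=
    fun θ hθ => le_trans le_self_add (hC θ hθ)
  have hCn : ∀ θ ∈ Set.Icc p q, (∫⁻ z, ENNReal.ofReal z ∂(n θ)) ≤ C :=
    fun θ hθ => le_trans le_add_self (hC θ hθ)
  haveI hfinθ : IsFiniteMeasure (volume.restrict (Set.Ioc p q)) := by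
    constructor
    rw [Measure.restrict_apply_univ, Real.volume_Ioc]
    exact ENNReal.ofReal_lt_top
  have haeθ : ∀ᵐ θ ∂(volume.restrict (Set.Ioc p q)), θ ∈ Set.Icc p q := by
    filter_upwards [ae_restrict_mem measurableSet_Ioc] with θ hθ
    exact Set.Ioc_subset_Icc_self hθ
  set ν : Measure ℝ := (volume.restrict (Set.Ioc p q)).bind (fun θ => n θ) with hνdef
  have hbindapp : ∀ {s : Set ℝ}, MeasurableSet s → ν s = ∫⁻ θ in Set.Ioc p q, (n θ) s := by
    intro s hs
    rw [hνdef, Measure.bind_apply hs (n.measurable : Measurable fun θ => n θ).aemeasurable]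
  have hν0 : ν (Set.Iic 0) = 0 := by
    rw [hbindapp measurableSet_Iic]
    have h0 : ∀ᵐ θ ∂(volume.restrict (Set.Ioc p q)), (n θ) (Set.Iic 0) = (0:ENNReal) :=
      haeθ.mono fun θ hθ => hn0 θ hθ
    rw [lintegral_congr_ae h0, lintegral_zero]
  have hνlint : ∀ {f : ℝ → ENNReal}, Measurable f →
      ∫⁻ z, f z ∂ν = ∫⁻ θ in Set.Ioc p q, (∫⁻ z, f z ∂(n θ)) := by
    intro f hf
    rw [hνdef, Measure.lintegral_bind n.measurable.aemeasurable hf.aemeasurable]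
  have hνz : (∫⁻ z, ENNReal.ofReal z ∂ν) < ⊤ := by
    rw [hνlint (f := fun z => ENNReal.ofReal z) (by fun_prop)]
    calc ∫⁻ θ in Set.Ioc p q, (∫⁻ z, ENNReal.ofReal z ∂(n θ))
        ≤ ∫⁻ _ in Set.Ioc p q, C := lintegral_mono_ae (haeθ.mono fun θ hθ => hCn θ hθ)
      _ = C * (volume.restrict (Set.Ioc p q)) Set.univ := by
          rw [lintegral_const]
      _ < ⊤ := ENNReal.mul_lt_top hCfin (measure_lt_top _ _)
  have hνm : (∫⁻ z, ENNReal.ofReal (min z (z ^ 2)) ∂ν) < ⊤ := by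
    refine lt_of_le_of_lt (lintegral_mono fun z => ENNReal.ofReal_le_ofReal ?_) hνz
    rcases le_total z 0 with h | h
    · exact min_le_left _ _
    · rcases le_total z 1 with h1 | h1
      · exact le_trans (min_le_right _ _) (by nlinarith)
      · exact min_le_left _ _
  set μ1 : Measure ℝ := mp + ν with hμ1def
  have hμ10 : μ1 (Set.Iic 0) = 0 := by
    rw [hμ1def, Measure.add_apply, hmp0, hν0, add_zero]
  have hμ1m : (∫⁻ z, ENNReal.ofReal (min z (z ^ 2)) ∂μ1) < ⊤ := by
    rw [hμ1def, lintegral_add_measure]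
    exact ENNReal.add_lt_top.2 ⟨hmp, hνm⟩
  -- integrabilities
  have hFmp : ∀ {lam : ℝ}, 0 ≤ lam → Integrable (Ffun lam) mp :=
    fun h => Ffun_integrable hmp0 hmp h
  have hFmq : ∀ {lam : ℝ}, 0 ≤ lam → Integrable (Ffun lam) mq :=
    fun h => Ffun_integrable hmq0 hmq h
  have hFν : ∀ {lam : ℝ}, 0 ≤ lam → Integrable (Ffun lam) ν :=
    fun h => Ffun_integrable hν0 hνm h
  have hidν : Integrable (fun z => z) ν :=
    integrable_of_lint hν0 measurable_id (fun z hz => hz.le) hνz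
  have hβint : Integrable β (volume.restrict (Set.Ioc p q)) := by
    refine Integrable.mono' (integrable_const C.toReal) hβmeas.aestronglyMeasurable ?_
    filter_upwards [haeθ] with θ hθ
    rw [Real.norm_eq_abs, abs_of_nonneg (hβnonneg θ)]
    exact (ENNReal.ofReal_le_iff_le_toReal hCfin.ne).1 (hCβ θ hθ)
  -- Fubini identities
  have kfid : (∫ θ in Set.Ioc p q, ∫ z, z ∂(n θ)) = ∫ z, z ∂ν :=
    (kernel_fubini p q n C hCfin hn0 hCn hν0 (fun z => z) measurable_id 1 zero_le_one
      (fun z hz => hz.le) (fun z hz => by linarith)).1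
  have kfg : ∀ lam : ℝ, 0 ≤ lam →
      ((∫ θ in Set.Ioc p q, ∫ z, (1 - Real.exp (-(z * lam))) ∂(n θ))
        = ∫ z, (1 - Real.exp (-(z * lam))) ∂ν)
      ∧ Integrable (fun θ => ∫ z, (1 - Real.exp (-(z * lam))) ∂(n θ))
          (volume.restrict (Set.Ioc p q)) := by
    intro lam hlam
    exact kernel_fubini p q n C hCfin hn0 hCn hν0
      (fun z => 1 - Real.exp (-(z * lam))) (by fun_prop) lam hlam
      (fun z hz => (exp_est4 (mul_nonneg hz.le hlam)).1)
      (fun z hz => by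
        have := (exp_est4 (mul_nonneg hz.le hlam)).2
        rw [mul_comm lam z]; exact this)
  set Bβ : ℝ := ∫ θ in Set.Ioc p q, β θ with hBβdef
  set Iν : ℝ := ∫ z, z ∂ν with hIνdef
  set c : ℝ := bp - bq - Bβ - Iν with hcdef
  -- the key linear relation
  have hstar : ∀ lam : ℝ, 0 ≤ lam →
      ∫ z, Ffun lam z ∂μ1 = ∫ z, Ffun lam z ∂mq - c * lam := by
    intro lam hlam
    have hz := hζ lam hlam
    have e : ∀ m : Measure ℝ,
        ∫ z, (Real.exp (-(z * lam)) - 1 + z * lam) ∂m = ∫ z, Ffun lam z ∂m := fun m => rfl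
    rw [e mp, e mq] at hz
    have hsplit : (∫ θ in Set.Ioc p q, (β θ * lam + ∫ z, (1 - Real.exp (-(z * lam))) ∂(n θ)))
        = Bβ * lam + ∫ z, (1 - Real.exp (-(z * lam))) ∂ν := by
      rw [integral_add (hβint.mul_const lam) (kfg lam hlam).2, integral_mul_const,
        (kfg lam hlam).1]
    have hgν : ∫ z, (1 - Real.exp (-(z * lam))) ∂ν = Iν * lam - ∫ z, Ffun lam z ∂ν := by
      have hident : (fun z : ℝ => 1 - Real.exp (-(z * lam))) = fun z => z * lam - Ffun lam z := by
        funext z; unfold Ffun; ring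
      rw [hident, integral_sub (hidν.mul_const lam) (hFν hlam), integral_mul_const, hIνdef]
    have hμ1split : ∫ z, Ffun lam z ∂μ1 = ∫ z, Ffun lam z ∂mp + ∫ z, Ffun lam z ∂ν := by
      rw [hμ1def]; exact integral_add_measure (hFmp hlam) (hFν hlam)
    rw [hsplit, hgν] at hz
    rw [hμ1split, hcdef]
    linarith
  -- second-difference identity and withDensity measures
  have hwd : ∀ h : ℝ, 0 < h →
      μ1.withDensity (fun z => ENNReal.ofReal ((1 - Real.exp (-(z * h))) ^ 2))
        = mq.withDensity (fun z => ENNReal.ofReal ((1 - Real.exp (-(z * h))) ^ 2)) := by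
    intro h hh
    have hwmeas : Measurable fun z : ℝ => ENNReal.ofReal ((1 - Real.exp (-(z * h))) ^ 2) := by
      fun_prop
    have hintc : ∀ (μ : Measure ℝ), μ (Set.Iic 0) = 0 →
        (∫⁻ z, ENNReal.ofReal (min z (z ^ 2)) ∂μ) < ⊤ → ∀ lam : ℝ, 0 ≤ lam →
        Integrable (fun z => Real.exp (-(z * lam)) * (1 - Real.exp (-(z * h))) ^ 2) μ := by
      intro μ h0 hm lam hlam
      have i1 : Integrable (Ffun lam) μ := Ffun_integrable h0 hm hlam
      have i2 : Integrable (Ffun (lam + h)) μ := Ffun_integrable h0 hm (by linarith)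
      have i3 : Integrable (Ffun (lam + 2 * h)) μ := Ffun_integrable h0 hm (by linarith)
      have hident : (fun z : ℝ => Real.exp (-(z * lam)) * (1 - Real.exp (-(z * h))) ^ 2)
          = fun z => Ffun lam z - 2 * Ffun (lam + h) z + Ffun (lam + 2 * h) z := by
        funext z; rw [Ffun_second_diff]
      rw [hident]
      exact (i1.sub (i2.const_mul 2)).add i3
    have hdiff : ∀ lam : ℝ, 0 ≤ lam →
        ∫ z, Real.exp (-(z * lam)) * (1 - Real.exp (-(z * h))) ^ 2 ∂μ1
          = ∫ z, Real.exp (-(z * lam)) * (1 - Real.exp (-(z * h))) ^ 2 ∂mq := by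
      intro lam hlam
      have key : ∀ (μ : Measure ℝ), μ (Set.Iic 0) = 0 →
          (∫⁻ z, ENNReal.ofReal (min z (z ^ 2)) ∂μ) < ⊤ →
          ∫ z, Real.exp (-(z * lam)) * (1 - Real.exp (-(z * h))) ^ 2 ∂μ
            = ∫ z, Ffun lam z ∂μ - 2 * ∫ z, Ffun (lam + h) z ∂μ
              + ∫ z, Ffun (lam + 2 * h) z ∂μ := by
        intro μ h0 hm
        have i1 : Integrable (Ffun lam) μ := Ffun_integrable h0 hm hlam
        have i2 : Integrable (Ffun (lam + h)) μ := Ffun_integrable h0 hm (by linarith)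
        have i3 : Integrable (Ffun (lam + 2 * h)) μ := Ffun_integrable h0 hm (by linarith)
        have i2' : Integrable (fun z => 2 * Ffun (lam + h) z) μ := i2.const_mul 2
        have i12 : Integrable (fun z => Ffun lam z - 2 * Ffun (lam + h) z) μ := i1.sub i2'
        have hident : (fun z : ℝ => Real.exp (-(z * lam)) * (1 - Real.exp (-(z * h))) ^ 2)
            = fun z => Ffun lam z - 2 * Ffun (lam + h) z + Ffun (lam + 2 * h) z := by
          funext z; rw [Ffun_second_diff]
        have A : ∫ z, (Ffun lam z - 2 * Ffun (lam + h) z + Ffun (lam + 2 * h) z) ∂μ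
            = (∫ z, (Ffun lam z - 2 * Ffun (lam + h) z) ∂μ) + ∫ z, Ffun (lam + 2 * h) z ∂μ :=
          integral_add i12 i3
        have Bsub : ∫ z, (Ffun lam z - 2 * Ffun (lam + h) z) ∂μ
            = (∫ z, Ffun lam z ∂μ) - ∫ z, 2 * Ffun (lam + h) z ∂μ := integral_sub i1 i2'
        have Cmul : ∫ z, 2 * Ffun (lam + h) z ∂μ = 2 * ∫ z, Ffun (lam + h) z ∂μ :=
          integral_const_mul 2 _
        rw [hident, A, Bsub, Cmul]
      rw [key μ1 hμ10 hμ1m, key mq hmq0 hmq, hstar lam hlam, hstar (lam + h) (by linarith),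
        hstar (lam + 2 * h) (by linarith)]
      ring
    have hwfin : ∀ (μ : Measure ℝ), μ (Set.Iic 0) = 0 →
        (∫⁻ z, ENNReal.ofReal (min z (z ^ 2)) ∂μ) < ⊤ →
        IsFiniteMeasure (μ.withDensity
          (fun z => ENNReal.ofReal ((1 - Real.exp (-(z * h))) ^ 2))) := by
      intro μ h0 hm
      constructor
      rw [withDensity_apply _ MeasurableSet.univ, Measure.restrict_univ]
      calc ∫⁻ z, ENNReal.ofReal ((1 - Real.exp (-(z * h))) ^ 2) ∂μ
          ≤ ∫⁻ z, ENNReal.ofReal (max 1 (h ^ 2) * min z (z ^ 2)) ∂μ :=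
            lint_mono_pos h0 (fun z hz => sq_bound hh hz)
        _ = ENNReal.ofReal (max 1 (h ^ 2)) * ∫⁻ z, ENNReal.ofReal (min z (z ^ 2)) ∂μ := by
            simp_rw [ENNReal.ofReal_mul (le_trans zero_le_one (le_max_left _ _))]
            exact lintegral_const_mul'' _ (by fun_prop)
        _ < ⊤ := ENNReal.mul_lt_top ENNReal.ofReal_lt_top hm
    haveI := hwfin μ1 hμ10 hμ1m
    haveI := hwfin mq hmq0 hmq
    have hwd0 : ∀ (μ : Measure ℝ), μ (Set.Iic 0) = 0 →
        (μ.withDensity (fun z => ENNReal.ofReal ((1 - Real.exp (-(z * h))) ^ 2)))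
          (Set.Iic 0) = 0 := by
      intro μ h0
      rw [withDensity_apply _ measurableSet_Iic, Measure.restrict_eq_zero.mpr h0,
        lintegral_zero_measure]
    refine laplaceDet _ _ (hwd0 μ1 hμ10) (hwd0 mq hmq0) fun k => ?_
    have hk : (0:ℝ) ≤ (k : ℝ) := Nat.cast_nonneg k
    rw [lintegral_withDensity_eq_lintegral_mul _ hwmeas (by fun_prop),
      lintegral_withDensity_eq_lintegral_mul _ hwmeas (by fun_prop)]
    have hident : ((fun z : ℝ => ENNReal.ofReal ((1 - Real.exp (-(z * h))) ^ 2))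
        * fun z : ℝ => ENNReal.ofReal (Real.exp (-(z * (k:ℝ)))))
        = fun z : ℝ => ENNReal.ofReal
            (Real.exp (-(z * (k:ℝ))) * (1 - Real.exp (-(z * h))) ^ 2) := by
      funext z
      simp only [Pi.mul_apply]
      rw [← ENNReal.ofReal_mul (sq_nonneg _), mul_comm]
    rw [hident]
    have hnn : ∀ z : ℝ, 0 ≤ Real.exp (-(z * (k:ℝ))) * (1 - Real.exp (-(z * h))) ^ 2 :=
      fun z => mul_nonneg (Real.exp_pos _).le (sq_nonneg _)
    rw [← ofReal_integral_eq_lintegral_ofReal (hintc μ1 hμ10 hμ1m (k:ℝ) hk)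
        (Filter.Eventually.of_forall hnn),
      ← ofReal_integral_eq_lintegral_ofReal (hintc mq hmq0 hmq (k:ℝ) hk)
        (Filter.Eventually.of_forall hnn),
      hdiff (k:ℝ) hk]
  -- monotone convergence: μ1 and mq agree on subsets of (0, ∞)
  have hagree : ∀ B : Set ℝ, MeasurableSet B → B ⊆ Set.Ioi 0 → μ1 B = mq B := by
    intro B hB hBsub
    set W : ℕ → ℝ → ENNReal :=
      fun k z => ENNReal.ofReal ((1 - Real.exp (-(z * ((k:ℝ) + 1)))) ^ 2) with hWdef
    have hWmeas : ∀ k, Measurable (W k) := fun k => by rw [hWdef]; fun_prop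
    have hWmono : ∀ z : ℝ, 0 < z → Monotone fun k : ℕ => W k z := by
      intro z hz a b hab
      apply ENNReal.ofReal_le_ofReal
      have hcast : (a : ℝ) ≤ (b : ℝ) := Nat.cast_le.2 hab
      have hba : Real.exp (-(z * ((b:ℝ) + 1))) ≤ Real.exp (-(z * ((a:ℝ) + 1))) :=
        Real.exp_le_exp.2 (by nlinarith)
      have h1a : Real.exp (-(z * ((a:ℝ) + 1))) ≤ 1 :=
        Real.exp_le_one_iff.2 (neg_nonpos.2 (by positivity))
      nlinarith [Real.exp_pos (-(z * ((b:ℝ) + 1)))]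
    have hWsup : ∀ z : ℝ, 0 < z → (⨆ k, W k z) = 1 := by
      intro z hz
      have h1 : Filter.Tendsto (fun k : ℕ => z * ((k:ℝ) + 1)) Filter.atTop Filter.atTop := by
        apply Filter.Tendsto.const_mul_atTop hz
        exact Filter.tendsto_atTop_add_const_right _ 1 tendsto_natCast_atTop_atTop
      have h2 : Filter.Tendsto (fun k : ℕ => Real.exp (-(z * ((k:ℝ) + 1)))) Filter.atTop
          (nhds 0) := Real.tendsto_exp_atBot.comp (Filter.tendsto_neg_atTop_atBot.comp h1)
      have h3 : Filter.Tendsto (fun k : ℕ => (1 - Real.exp (-(z * ((k:ℝ) + 1)))) ^ 2)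
          Filter.atTop (nhds 1) := by
        have hsub : Filter.Tendsto (fun k : ℕ => 1 - Real.exp (-(z * ((k:ℝ) + 1))))
            Filter.atTop (nhds 1) := by
          have := (tendsto_const_nhds : Filter.Tendsto (fun _ : ℕ => (1:ℝ))
            Filter.atTop (nhds 1)).sub h2
          simpa using this
        have := hsub.pow 2
        simpa using this
      have h4 : Filter.Tendsto (fun k : ℕ => W k z) Filter.atTop (nhds 1) := by
        have := (ENNReal.continuous_ofReal.tendsto 1).comp h3
        simpa [hWdef, Function.comp_def] using this
      exact tendsto_nhds_unique (tendsto_atTop_iSup (hWmono z hz)) h4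
    have hMCT : ∀ (μ : Measure ℝ), μ B = ⨆ k, ∫⁻ z in B, W k z ∂μ := by
      intro μ
      have e1 : μ B = ∫⁻ z in B, (⨆ k, W k z) ∂μ := by
        rw [← setLIntegral_one]
        refine lintegral_congr_ae ?_
        filter_upwards [ae_restrict_mem hB] with z hz
        rw [hWsup z (hBsub hz)]
      rw [e1]
      refine lintegral_iSup' (fun k => (hWmeas k).aemeasurable) ?_
      filter_upwards [ae_restrict_mem hB] with z hz using hWmono z (hBsub hz)
    have hWeq : ∀ k : ℕ, ∫⁻ z in B, W k z ∂μ1 = ∫⁻ z in B, W k z ∂mq := by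
      intro k
      have hpos : (0:ℝ) < (k:ℝ) + 1 := by positivity
      have := hwd ((k:ℝ) + 1) hpos
      rw [hWdef]
      rw [← withDensity_apply _ hB, ← withDensity_apply _ hB, this]
    rw [hMCT μ1, hMCT mq]
    exact iSup_congr hWeq
  -- full measure equality
  have hμ1mq : μ1 = mq := by
    ext s hs
    have d1 : ∀ (μ : Measure ℝ), μ (Set.Iic 0) = 0 → μ s = μ (s ∩ Set.Ioi 0) := by
      intro μ h0
      have hzero : μ (s \ Set.Ioi 0) = 0 := by
        refine measure_mono_null (fun z hz => ?_) h0
        rcases hz with ⟨_, hz2⟩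
        simpa using not_lt.1 (by simpa using hz2)
      rw [← measure_inter_add_diff s measurableSet_Ioi, hzero, add_zero]
    rw [d1 μ1 hμ10, d1 mq hmq0,
      hagree _ (hs.inter measurableSet_Ioi) Set.inter_subset_right]
  constructor
  · have h1 := hstar 1 zero_le_one
    rw [hμ1mq] at h1
    have hc0 : c = 0 := by linarith
    rw [hcdef] at hc0
    rw [kfid]
    linarith
  · intro B hB hBsub
    rw [← hμ1mq, hμ1def, Measure.add_apply, hbindapp hB]
end

section
/- With the setup below, for every p ≤ q ∈ T and every bounded Borel f : [0,∞) → [0,∞) with compact support, the function s ↦ u_{p,q}(s,f) = f(s) + φ_p(u_q(s,f)) − φ_q(u_q(s,f)) is a bounded nonnegative Borel function with compact support, and u_p(s, u_{p,q}(·,f)) = u_q(s,f) for all s ≥ 0. -/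
open MeasureTheory

/-- A bounded nonnegative Borel function on `[0,∞)` with compact support
(vanishing for all sufficiently large arguments). -/
def CSB (g : ℝ → ℝ) : Prop :=
  Measurable g ∧ (∀ s, 0 ≤ g s) ∧ (∃ C : ℝ, ∀ s, g s ≤ C) ∧
    ∃ S : ℝ, ∀ s, S ≤ s → g s = 0

/-- `w` is a solution of `w(s) + ∫_s^∞ φ_q(w(t)) dt = ∫_s^∞ g(t) dt` in the class of
bounded nonnegative Borel functions vanishing for large arguments. -/
def IsSol (φq : ℝ → ℝ) (g w : ℝ → ℝ) : Prop :=
  CSB w ∧ ∀ s : ℝ, 0 ≤ s →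
    w s + (∫ t in Set.Ioi s, φq (w t)) = ∫ t in Set.Ioi s, g t

/-- `u_{p,q}(s,g) = g(s) + φ_p(u_q(s,g)) - φ_q(u_q(s,g))`. -/
noncomputable def upq (φ : ℝ → ℝ → ℝ) (u : ℝ → (ℝ → ℝ) → ℝ → ℝ)
    (p q : ℝ) (g : ℝ → ℝ) (s : ℝ) : ℝ :=
  g s + φ p (u q g s) - φ q (u q g s)

lemma aux_int {h : ℝ → ℝ} (hm : Measurable h) {C S : ℝ}
    (hb : ∀ t, |h t| ≤ C) (h0 : ∀ t, S ≤ t → h t = 0) (s : ℝ) :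
    MeasureTheory.IntegrableOn h (Set.Ioi s) := by
  have hzero : MeasureTheory.IntegrableOn h (Set.Ioi S) := by
    refine (MeasureTheory.integrableOn_zero).congr_fun ?_ measurableSet_Ioi
    exact fun t ht => (h0 t (le_of_lt ht)).symm
  rcases le_total s S with hsS | hSs
  · have hIoc : MeasureTheory.IntegrableOn h (Set.Ioc s S) := by
      refine Measure.integrableOn_of_bounded (M := C) (by simp) hm.aestronglyMeasurable ?_
      exact Filter.Eventually.of_forall fun t => by simpa [Real.norm_eq_abs] using hb t
    rw [← Set.Ioc_union_Ioi_eq_Ioi hsS]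
    exact hIoc.union hzero
  · exact hzero.mono_set (Set.Ioi_subset_Ioi hSs)

theorem stmt9 (T : Set ℝ) (hT : T.OrdConnected)
    (φ : ℝ → ℝ → ℝ)
    (hφcont : ∀ q ∈ T, Continuous (φ q))
    (hφ0 : ∀ q ∈ T, φ q 0 = 0)
    -- `q ↦ φ_q(λ)` is decreasing for each `λ ≥ 0`
    (hφdec : ∀ lam : ℝ, 0 ≤ lam → ∀ p ∈ T, ∀ q ∈ T, p ≤ q → φ q lam ≤ φ p lam)
    (u : ℝ → (ℝ → ℝ) → ℝ → ℝ)
    -- existence and uniqueness of `u_q(·,g)`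
    (hu : ∀ q ∈ T, ∀ g, CSB g → IsSol (φ q) g (u q g))
    (huniq : ∀ q ∈ T, ∀ g, CSB g → ∀ w, IsSol (φ q) g w → ∀ s, 0 ≤ s → w s = u q g s) :
    ∀ p ∈ T, ∀ q ∈ T, p ≤ q → ∀ f, CSB f →
      CSB (upq φ u p q f) ∧
      ∀ s : ℝ, 0 ≤ s → u p (upq φ u p q f) s = u q f s := by
  intro p hp q hq hpq f hf
  obtain ⟨hfm, hf0, ⟨Cf, hfC⟩, Sf, hfS⟩ := hf
  obtain ⟨⟨hwm, hw0, ⟨Cw, hwC⟩, Sw, hwS⟩, heq⟩ :=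
    hu q hq f ⟨hfm, hf0, ⟨Cf, hfC⟩, Sf, hfS⟩
  set w := u q f with hwdef
  obtain ⟨Mp, hMp⟩ := (isCompact_Icc (a := (0:ℝ)) (b := Cw)).exists_bound_of_continuousOn
    (hφcont p hp).continuousOn
  obtain ⟨Mq, hMq⟩ := (isCompact_Icc (a := (0:ℝ)) (b := Cw)).exists_bound_of_continuousOn
    (hφcont q hq).continuousOn
  have hwmem : ∀ t, w t ∈ Set.Icc 0 Cw := fun t => ⟨hw0 t, hwC t⟩
  set g := upq φ u p q f with hgdef
  have hgval : ∀ t, g t = f t + φ p (w t) - φ q (w t) := fun t => rfl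
  have hgm : Measurable g := by
    have h1 : Measurable fun t => φ p (w t) := (hφcont p hp).measurable.comp hwm
    have h2 : Measurable fun t => φ q (w t) := (hφcont q hq).measurable.comp hwm
    have : Measurable fun t => f t + φ p (w t) - φ q (w t) := (hfm.add h1).sub h2
    exact this
  have hg0 : ∀ t, 0 ≤ g t := by
    intro t
    have h1 := hφdec (w t) (hw0 t) p hp q hq hpq
    have h2 := hf0 t
    rw [hgval t]; linarith
  have hgC : ∀ t, g t ≤ Cf + Mp + Mq := by
    intro t
    have h1 := hMp (w t) (hwmem t)
    have h2 := hMq (w t) (hwmem t)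
    rw [Real.norm_eq_abs] at h1 h2
    have h1' := (abs_le.mp h1).2
    have h2' := (abs_le.mp h2).1
    have h3 := hfC t
    rw [hgval t]; linarith
  have hgS : ∀ t, max Sf Sw ≤ t → g t = 0 := by
    intro t ht
    have hf' : f t = 0 := hfS t (le_trans (le_max_left _ _) ht)
    have hw' : w t = 0 := hwS t (le_trans (le_max_right _ _) ht)
    rw [hgval t, hf', hw', hφ0 p hp, hφ0 q hq]; ring
  have hgCSB : CSB g := ⟨hgm, hg0, ⟨Cf + Mp + Mq, hgC⟩, max Sf Sw, hgS⟩
  refine ⟨hgCSB, ?_⟩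
  -- show w solves the equation for φ p with data g
  have hsol : IsSol (φ p) g w := by
    refine ⟨⟨hwm, hw0, ⟨Cw, hwC⟩, Sw, hwS⟩, ?_⟩
    intro s hs
    have hIf : MeasureTheory.IntegrableOn f (Set.Ioi s) := by
      refine aux_int hfm (C := Cf) (S := Sf) ?_ hfS s
      intro t; rw [abs_of_nonneg (hf0 t)]; exact hfC t
    have hIp : MeasureTheory.IntegrableOn (fun t => φ p (w t)) (Set.Ioi s) := by
      refine aux_int ((hφcont p hp).measurable.comp hwm) (C := Mp) (S := Sw) ?_ ?_ s
      · intro t; simpa [Function.comp, Real.norm_eq_abs] using hMp (w t) (hwmem t)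
      · intro t ht; simp only [Function.comp]; rw [hwS t ht, hφ0 p hp]
    have hIq : MeasureTheory.IntegrableOn (fun t => φ q (w t)) (Set.Ioi s) := by
      refine aux_int ((hφcont q hq).measurable.comp hwm) (C := Mq) (S := Sw) ?_ ?_ s
      · intro t; simpa [Function.comp, Real.norm_eq_abs] using hMq (w t) (hwmem t)
      · intro t ht; simp only [Function.comp]; rw [hwS t ht, hφ0 q hq]
    have hsplit : ∫ t in Set.Ioi s, g t =
        (∫ t in Set.Ioi s, f t) + (∫ t in Set.Ioi s, φ p (w t))
          - ∫ t in Set.Ioi s, φ q (w t) := by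
      have e1 : ∫ t in Set.Ioi s, (f t + φ p (w t) - φ q (w t)) =
          (∫ t in Set.Ioi s, (f t + φ p (w t))) - ∫ t in Set.Ioi s, φ q (w t) :=
        MeasureTheory.integral_sub (hIf.add hIp) hIq
      have e2 : ∫ t in Set.Ioi s, (f t + φ p (w t)) =
          (∫ t in Set.Ioi s, f t) + ∫ t in Set.Ioi s, φ p (w t) :=
        MeasureTheory.integral_add hIf hIp
      have e0 : ∫ t in Set.Ioi s, g t =
          ∫ t in Set.Ioi s, (f t + φ p (w t) - φ q (w t)) := rfl
      rw [e0, e1, e2]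
    have h0 := heq s hs
    rw [hsplit]; linarith
  intro s hs
  exact (huniq p hp g hgCSB w hsol s hs).symm
end

section
/- With the setup below, for every p ≤ θ ≤ q ∈ T and every bounded Borel f : [0,∞) → [0,∞) with compact support, u_{p,θ}(s, u_{θ,q}(·,f)) = u_{p,q}(s,f) for all s ≥ 0. -/
open MeasureTheory

/-- A measurable function bounded in absolute value and vanishing at infinity is
integrable on `Ioi s`. -/
lemma intOn_aux {g : ℝ → ℝ} (hm : Measurable g) {C S : ℝ}
    (hC : ∀ t, |g t| ≤ C) (hS : ∀ t, S ≤ t → g t = 0) (s : ℝ) :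
    IntegrableOn g (Set.Ioi s) := by
  have h1 : IntegrableOn g (Set.Ioc s S) := by
    refine Integrable.mono' (g := fun _ => C) ?_ hm.aestronglyMeasurable ?_
    · exact integrableOn_const measure_Ioc_lt_top.ne
    · filter_upwards with t using hC t
  have h2 : IntegrableOn g (Set.Ioi S) := by
    refine (integrableOn_zero).congr_fun ?_ measurableSet_Ioi
    intro t ht; exact (hS t ht.le).symm
  refine (h1.union h2).mono_set (fun t ht => ?_)
  by_cases h : t ≤ S
  · exact Or.inl ⟨ht, h⟩
  · exact Or.inr (lt_of_not_ge h)

theorem stmt10 (T : Set ℝ) (hT : T.OrdConnected)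
    (φ : ℝ → ℝ → ℝ)
    (hφcont : ∀ q ∈ T, Continuous (φ q))
    (hφ0 : ∀ q ∈ T, φ q 0 = 0)
    -- `q ↦ φ_q(λ)` is decreasing for each `λ ≥ 0`
    (hφdec : ∀ lam : ℝ, 0 ≤ lam → ∀ p ∈ T, ∀ q ∈ T, p ≤ q → φ q lam ≤ φ p lam)
    (u : ℝ → (ℝ → ℝ) → ℝ → ℝ)
    -- existence and uniqueness of `u_q(·,g)`
    (hu : ∀ q ∈ T, ∀ g, CSB g → IsSol (φ q) g (u q g))
    (huniq : ∀ q ∈ T, ∀ g, CSB g → ∀ w, IsSol (φ q) g w → ∀ s, 0 ≤ s → w s = u q g s) :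
    ∀ p ∈ T, ∀ θ ∈ T, ∀ q ∈ T, p ≤ θ → θ ≤ q → ∀ f, CSB f →
      ∀ s : ℝ, 0 ≤ s →
        upq φ u p θ (upq φ u θ q f) s = upq φ u p q f s := by
  intro p hp θ hθ q hq hpθ hθq f hf s hs
  obtain ⟨hfm, hfnn, ⟨Cf, hCf⟩, Sf, hSf⟩ := hf
  have hsol := hu q hq f ⟨hfm, hfnn, ⟨Cf, hCf⟩, Sf, hSf⟩
  obtain ⟨⟨hwm, hwnn, ⟨Cw, hCw⟩, Sw, hSw⟩, hweq⟩ := hsol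
  set w : ℝ → ℝ := u q f with hw
  set g : ℝ → ℝ := upq φ u θ q f with hg
  have hgdef : ∀ t, g t = f t + φ θ (w t) - φ q (w t) := fun t => rfl
  -- `w t` lies in the compact set `Icc 0 Cw`
  have hwmem : ∀ t, w t ∈ Set.Icc 0 Cw := fun t => ⟨hwnn t, hCw t⟩
  -- bounds for compositions
  have hbd : ∀ r ∈ T, ∃ C, ∀ t, |φ r (w t)| ≤ C := by
    intro r hr
    obtain ⟨C, hC⟩ := (isCompact_Icc (a := (0:ℝ)) (b := Cw)).exists_bound_of_continuousOn
      (hφcont r hr).continuousOn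
    exact ⟨C, fun t => by simpa using hC _ (hwmem t)⟩
  obtain ⟨Cθ, hCθ⟩ := hbd θ hθ
  obtain ⟨Cq, hCq⟩ := hbd q hq
  -- compositions vanish at infinity
  have hvan : ∀ r ∈ T, ∀ t, Sw ≤ t → φ r (w t) = 0 := by
    intro r hr t ht; rw [hSw t ht, hφ0 r hr]
  -- measurability of compositions
  have hmθ : Measurable fun t => φ θ (w t) := (hφcont θ hθ).measurable.comp hwm
  have hmq : Measurable fun t => φ q (w t) := (hφcont q hq).measurable.comp hwm
  -- CSB g
  have hgcsb : CSB g := by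
    refine ⟨(hfm.add hmθ).sub hmq, fun t => ?_, ⟨Cf + Cθ + Cq, fun t => ?_⟩,
      ⟨max Sf Sw, fun t ht => ?_⟩⟩
    · have := hφdec (w t) (hwnn t) θ hθ q hq hθq
      rw [hgdef]; linarith [hfnn t]
    · have h1 := hCθ t
      have h2 := hCq t
      rw [hgdef, abs_le] at *
      linarith [hCf t, h1.2, h2.1]
    · rw [hgdef, hSf t (le_trans (le_max_left _ _) ht),
        hvan θ hθ t (le_trans (le_max_right _ _) ht),
        hvan q hq t (le_trans (le_max_right _ _) ht)]
      ring
  -- w solves the θ-equation with source g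
  have hsolθ : IsSol (φ θ) g w := by
    refine ⟨⟨hwm, hwnn, ⟨Cw, hCw⟩, Sw, hSw⟩, fun s' hs' => ?_⟩
    have hif : IntegrableOn f (Set.Ioi s') :=
      intOn_aux hfm (C := |Cf|) (fun t => by
        rw [abs_of_nonneg (hfnn t)]; exact le_trans (hCf t) (le_abs_self Cf)) hSf s'
    have hiθ : IntegrableOn (fun t => φ θ (w t)) (Set.Ioi s') :=
      intOn_aux hmθ hCθ (hvan θ hθ) s'
    have hiq : IntegrableOn (fun t => φ q (w t)) (Set.Ioi s') :=
      intOn_aux hmq hCq (hvan q hq) s'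
    have hsplit : (∫ t in Set.Ioi s', g t)
        = (∫ t in Set.Ioi s', f t) + (∫ t in Set.Ioi s', φ θ (w t))
          - ∫ t in Set.Ioi s', φ q (w t) := by
      have hiF : IntegrableOn (fun t => f t + φ θ (w t)) (Set.Ioi s') volume :=
        hif.add hiθ
      rw [show g = fun t => (f t + φ θ (w t)) - φ q (w t) from funext hgdef]
      rw [integral_sub hiF hiq, integral_add hif hiθ]
    have := hweq s' hs'
    rw [hsplit]; linarith
  -- uniqueness : u θ g = w on [0,∞)
  have hkey : w s = u θ g s := huniq θ hθ g hgcsb w hsolθ s hs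
  show g s + φ p (u θ g s) - φ θ (u θ g s) = f s + φ p (w s) - φ q (w s)
  rw [← hkey, hgdef]; ring
end

section
/- With the setup below, assume in addition that for each λ ≥ 0 the function q ↦ φ_q(λ) is continuously differentiable on T with (∂/∂q) φ_q(λ) = −ζ_q(λ), where (θ,λ) ↦ ζ_θ(λ) is continuous on T × [0,∞). Then for every p ≤ q ∈ T, every s ≥ 0, and every bounded Borel f : [0,∞) → [0,∞) with compact support, u_{p,q}(s,f) = f(s) + ∫_p^q ζ_θ(u_θ(s, u_{θ,q}(·,f))) dθ. -/
set_option maxHeartbeats 1000000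


open MeasureTheory

/-- A bounded measurable function vanishing for large arguments is integrable on `Ioi s'`. -/
lemma integOn (h : ℝ → ℝ) (hm : Measurable h) (M S s' : ℝ)
    (hb : ∀ t, |h t| ≤ M) (hS : ∀ t, S ≤ t → h t = 0) :
    IntegrableOn h (Set.Ioi s') := by
  have h1 : IntegrableOn h (Set.Ioc s' S) := by
    refine Integrable.mono' (g := fun _ => M)
      (integrableOn_const measure_Ioc_lt_top.ne)
      hm.aestronglyMeasurable.restrict ?_
    filter_upwards with t using hb t
  have h2 : IntegrableOn h (Set.Ioi S) := by
    rw [integrableOn_congr_fun (g := fun _ => (0:ℝ))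
      (fun t (ht : t ∈ Set.Ioi S) => hS t (le_of_lt ht)) measurableSet_Ioi]
    exact integrableOn_zero
  refine (h1.union h2).mono_set ?_
  intro t ht
  rcases le_or_gt t S with h | h
  · exact Or.inl ⟨ht, h⟩
  · exact Or.inr h

theorem stmt11 (T : Set ℝ) (hT : T.OrdConnected)
    (φ : ℝ → ℝ → ℝ)
    (hφcont : ∀ q ∈ T, Continuous (φ q))
    (hφ0 : ∀ q ∈ T, φ q 0 = 0)
    -- `q ↦ φ_q(λ)` is decreasing for each `λ ≥ 0`
    (hφdec : ∀ lam : ℝ, 0 ≤ lam → ∀ p ∈ T, ∀ q ∈ T, p ≤ q → φ q lam ≤ φ p lam)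
    (u : ℝ → (ℝ → ℝ) → ℝ → ℝ)
    -- existence and uniqueness of `u_q(·,g)`
    (hu : ∀ q ∈ T, ∀ g, CSB g → IsSol (φ q) g (u q g))
    (huniq : ∀ q ∈ T, ∀ g, CSB g → ∀ w, IsSol (φ q) g w → ∀ s, 0 ≤ s → w s = u q g s)
    -- `(θ,λ) ↦ ζ_θ(λ)` is continuous on `T × [0,∞)`
    (ζ : ℝ → ℝ → ℝ)
    (hζcont : ContinuousOn (fun x : ℝ × ℝ => ζ x.1 x.2) (T ×ˢ Set.Ici 0))
    -- `q ↦ φ_q(λ)` is continuously differentiable on `T` with derivative `-ζ_q(λ)`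
    (hφderiv : ∀ lam : ℝ, 0 ≤ lam → ∀ q ∈ T,
      HasDerivWithinAt (fun r => φ r lam) (-ζ q lam) T q) :
    ∀ p ∈ T, ∀ q ∈ T, p ≤ q → ∀ f, CSB f →
      ∀ s : ℝ, 0 ≤ s →
        upq φ u p q f s
          = f s + ∫ θ in p..q, ζ θ (u θ (upq φ u θ q f) s) := by
  intro p hp q hq hpq f hf s hs
  have hIccT : Set.Icc p q ⊆ T := fun x hx => hT.out hp hq hx
  obtain ⟨⟨hwm, hwnn, ⟨C, hwC⟩, ⟨Sw, hSw⟩⟩, hweq⟩ := hu q hq f hf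
  obtain ⟨hfm, hfnn, ⟨Cf, hfC⟩, ⟨Sf, hSf⟩⟩ := hf
  set w := u q f with hw
  have hwIcc : ∀ t, w t ∈ Set.Icc 0 C := fun t => ⟨hwnn t, hwC t⟩
  have hintf : ∀ s' : ℝ, IntegrableOn f (Set.Ioi s') := by
    intro s'
    refine integOn f hfm Cf Sf s' (fun t => ?_) hSf
    rw [abs_of_nonneg (hfnn t)]; exact hfC t
  -- Key: for θ ∈ [p,q], `w` solves the equation for data `u_{θ,q}(·,f)`, hence equals
  -- `u θ (u_{θ,q}(·,f))` on `[0,∞)`.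
  have key : ∀ θ ∈ Set.Icc p q, u θ (upq φ u θ q f) s = w s := by
    intro θ hθI
    have hθT : θ ∈ T := hIccT hθI
    obtain ⟨M1, hM1⟩ := isCompact_Icc.exists_bound_of_continuousOn
      (s := Set.Icc (0:ℝ) C) ((hφcont θ hθT).continuousOn)
    obtain ⟨M2, hM2⟩ := isCompact_Icc.exists_bound_of_continuousOn
      (s := Set.Icc (0:ℝ) C) ((hφcont q hq).continuousOn)
    have hmθ : Measurable (fun t => φ θ (w t)) := ((hφcont θ hθT).measurable).comp hwm
    have hmq : Measurable (fun t => φ q (w t)) := ((hφcont q hq).measurable).comp hwm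
    have hbθ : ∀ t, |φ θ (w t)| ≤ M1 := by
      intro t; rw [← Real.norm_eq_abs]; exact hM1 _ (hwIcc t)
    have hbq : ∀ t, |φ q (w t)| ≤ M2 := by
      intro t; rw [← Real.norm_eq_abs]; exact hM2 _ (hwIcc t)
    have hzθ : ∀ t, Sw ≤ t → φ θ (w t) = 0 := by
      intro t ht; rw [hSw t ht, hφ0 θ hθT]
    have hzq : ∀ t, Sw ≤ t → φ q (w t) = 0 := by
      intro t ht; rw [hSw t ht, hφ0 q hq]
    have hIθ : ∀ s' : ℝ, IntegrableOn (fun t => φ θ (w t)) (Set.Ioi s') :=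
      fun s' => integOn _ hmθ M1 Sw s' hbθ hzθ
    have hIq : ∀ s' : ℝ, IntegrableOn (fun t => φ q (w t)) (Set.Ioi s') :=
      fun s' => integOn _ hmq M2 Sw s' hbq hzq
    have hgdef : ∀ t, upq φ u θ q f t = f t + φ θ (w t) - φ q (w t) := fun t => rfl
    have hCSBg : CSB (upq φ u θ q f) := by
      refine ⟨?_, ?_, ⟨Cf + M1 + M2, ?_⟩, ⟨max Sf Sw, ?_⟩⟩
      · have : (fun t => upq φ u θ q f t) = fun t => f t + φ θ (w t) - φ q (w t) := rfl
        show Measurable fun t => upq φ u θ q f t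
        rw [this]; exact (hfm.add hmθ).sub hmq
      · intro t
        have h1 := hφdec (w t) (hwnn t) θ hθT q hq hθI.2
        have h2 := hfnn t
        rw [hgdef t]; linarith
      · intro t
        have h1 := (abs_le.mp (hbθ t)).2
        have h2 := (abs_le.mp (hbq t)).1
        have h3 := hfC t
        rw [hgdef t]; linarith
      · intro t ht
        rw [hgdef t, hSf t (le_trans (le_max_left _ _) ht),
          hzθ t (le_trans (le_max_right _ _) ht), hzq t (le_trans (le_max_right _ _) ht)]
        ring
    have hSol : IsSol (φ θ) (upq φ u θ q f) w := by
      refine ⟨⟨hwm, hwnn, ⟨C, hwC⟩, ⟨Sw, hSw⟩⟩, ?_⟩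
      intro s' hs'
      have heq := hweq s' hs'
      have hsplit : (∫ t in Set.Ioi s', upq φ u θ q f t)
          = (∫ t in Set.Ioi s', f t) + (∫ t in Set.Ioi s', φ θ (w t))
            - ∫ t in Set.Ioi s', φ q (w t) := by
        have h12 : IntegrableOn (fun t => f t + φ θ (w t)) (Set.Ioi s') :=
          (hintf s').add (hIθ s')
        calc (∫ t in Set.Ioi s', upq φ u θ q f t)
            = ∫ t in Set.Ioi s', (f t + φ θ (w t) - φ q (w t)) := by
              simp only [upq, ← hw]
          _ = _ := by
              rw [integral_sub h12 (hIq s'), integral_add (hintf s') (hIθ s')]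
      rw [hsplit]; linarith
    exact (huniq θ hθT _ hCSBg w hSol s hs).symm
  set lam := w s with hlam
  have hlamnn : 0 ≤ lam := hwnn s
  have hcongr : (∫ θ in p..q, ζ θ (u θ (upq φ u θ q f) s)) = ∫ θ in p..q, ζ θ lam := by
    apply intervalIntegral.integral_congr
    intro θ hθ
    rw [Set.uIcc_of_le hpq] at hθ
    show ζ θ (u θ (upq φ u θ q f) s) = ζ θ lam
    rw [key θ hθ]
  have hcontζ : ContinuousOn (fun θ => ζ θ lam) (Set.Icc p q) := by
    have hrw : (fun θ => ζ θ lam)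
        = (fun x : ℝ × ℝ => ζ x.1 x.2) ∘ (fun θ => (θ, lam)) := rfl
    rw [hrw]
    exact hζcont.comp (Continuous.continuousOn (by continuity))
      (fun θ hθ => ⟨hIccT hθ, hlamnn⟩)
  have hderiv : ∀ θ ∈ Set.Ioo p q,
      HasDerivWithinAt (fun r => φ r lam) (-ζ θ lam) (Set.Ioi θ) θ := by
    intro θ hθ
    have h1 := (hφderiv lam hlamnn θ (hIccT (Set.Ioo_subset_Icc_self hθ))).mono hIccT
    exact h1.mono_of_mem_nhdsWithin (Icc_mem_nhdsGT_of_mem ⟨hθ.1.le, hθ.2⟩)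
  have hcontφ : ContinuousOn (fun r => φ r lam) (Set.Icc p q) := fun θ hθ =>
    ((hφderiv lam hlamnn θ (hIccT hθ)).continuousWithinAt).mono hIccT
  have hint : IntervalIntegrable (fun θ => -ζ θ lam) volume p q := by
    apply ContinuousOn.intervalIntegrable
    rw [Set.uIcc_of_le hpq]
    exact hcontζ.neg
  have hftc := intervalIntegral.integral_eq_sub_of_hasDeriv_right_of_le hpq hcontφ hderiv hint
  have hval : (∫ θ in p..q, ζ θ lam) = φ p lam - φ q lam := by
    rw [intervalIntegral.integral_neg] at hftc
    linarith
  rw [hcongr, hval]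
  show f s + φ p (w s) - φ q (w s) = f s + (φ p lam - φ q lam)
  rw [← hlam]; ring
end
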